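/- Let (X_i) be a strictly stationary sequence with mixing coefficients α(k), tail function H(t) = P(|X₀| > t), and let X_i' = (X_i ∧ M) ∨ (−M) with M = Q(v) for some v ∈ (0,1], where Q is the generalized inverse of H. Then ∫_{−M}^{M} ( Var(∑_{i=1}^q 1_{X_i' ≤ t}) )^{1/2} dt ≤ 2√2 · √q · ∫_0^∞ ( ∑_{k=0}^{q−1} min(α(k), H(t)) )^{1/2} dt. -/

import Mathlib

open MeasureTheory

/-- The σ-algebra of the past, `σ(X_i, i ≤ 0)`. -/
def pastSigma {Ω : Type*} (X : ℤ → Ω → ℝ) : MeasurableSpace Ω :=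
  ⨆ i : {i : ℤ // i ≤ 0}, MeasurableSpace.comap (X i.1) (inferInstance : MeasurableSpace ℝ)

/-- The σ-algebra of the future, `σ(X_i, i ≥ k)`. -/
def futureSigma {Ω : Type*} (X : ℤ → Ω → ℝ) (k : ℤ) : MeasurableSpace Ω :=
  ⨆ i : {i : ℤ // k ≤ i}, MeasurableSpace.comap (X i.1) (inferInstance : MeasurableSpace ℝ)

/-- Rosenblatt's strong mixing coefficients `α(k)`. -/
noncomputable def alphaMix {Ω : Type*} [MeasurableSpace Ω] (P : Measure Ω)
    (X : ℤ → Ω → ℝ) (k : ℕ) : ℝ :=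
  sSup {r | ∃ A B : Set Ω, MeasurableSet[pastSigma X] A ∧
    MeasurableSet[futureSigma X k] B ∧
    r = |(P (A ∩ B)).toReal - (P A).toReal * (P B).toReal|}

/-- Strict stationarity: the finite dimensional distributions are shift invariant. -/
def IsStrictlyStationary {Ω : Type*} [MeasurableSpace Ω] (P : Measure Ω)
    (X : ℤ → Ω → ℝ) : Prop :=
  ∀ (m : ℕ) (ind : Fin m → ℤ) (h : ℤ),
    Measure.map (fun ω j => X (ind j + h) ω) P = Measure.map (fun ω j => X (ind j) ω) P

/-- Truncation at level `M`. -/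
def trunc (M x : ℝ) : ℝ := max (min x M) (-M)

lemma trunc_meas (M : ℝ) : Measurable (trunc M) :=
  (measurable_id.min measurable_const).max measurable_const

lemma aux_toReal_le_one' {Ω : Type*} [MeasurableSpace Ω] (P : Measure Ω)
    [IsProbabilityMeasure P] (A : Set Ω) : (P A).toReal ≤ 1 := by
  have h := ENNReal.toReal_mono (by simp) (prob_le_one (μ := P) (s := A))
  simpa using h

lemma aux_alpha_ub {Ω : Type*} [MeasurableSpace Ω] (P : Measure Ω)
    [IsProbabilityMeasure P] (X : ℤ → Ω → ℝ) (k : ℕ) :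
    ∀ r ∈ {r | ∃ A B : Set Ω, MeasurableSet[pastSigma X] A ∧
      MeasurableSet[futureSigma X k] B ∧
      r = |(P (A ∩ B)).toReal - (P A).toReal * (P B).toReal|}, r ≤ 1 := by
  rintro r ⟨A, B, -, -, rfl⟩
  have h1 : (P (A ∩ B)).toReal ≤ 1 := aux_toReal_le_one' P _
  have h2 : (P A).toReal ≤ 1 := aux_toReal_le_one' P _
  have h3 : (P B).toReal ≤ 1 := aux_toReal_le_one' P _
  have h4 : (0:ℝ) ≤ (P (A ∩ B)).toReal := ENNReal.toReal_nonneg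
  have h5 : (0:ℝ) ≤ (P A).toReal := ENNReal.toReal_nonneg
  have h6 : (0:ℝ) ≤ (P B).toReal := ENNReal.toReal_nonneg
  rw [abs_le]
  constructor <;> nlinarith

lemma aux_alpha_bddAbove {Ω : Type*} [MeasurableSpace Ω] (P : Measure Ω)
    [IsProbabilityMeasure P] (X : ℤ → Ω → ℝ) (k : ℕ) :
    BddAbove {r | ∃ A B : Set Ω, MeasurableSet[pastSigma X] A ∧
      MeasurableSet[futureSigma X k] B ∧
      r = |(P (A ∩ B)).toReal - (P A).toReal * (P B).toReal|} :=
  ⟨1, aux_alpha_ub P X k⟩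

lemma aux_alpha_nonneg {Ω : Type*} [MeasurableSpace Ω] (P : Measure Ω)
    [IsProbabilityMeasure P] (X : ℤ → Ω → ℝ) (k : ℕ) : 0 ≤ alphaMix P X k := by
  refine le_csSup (aux_alpha_bddAbove P X k) ?_
  exact ⟨∅, ∅, @MeasurableSet.empty Ω (pastSigma X), @MeasurableSet.empty Ω (futureSigma X k), by simp⟩

lemma aux_alpha_le_one {Ω : Type*} [MeasurableSpace Ω] (P : Measure Ω)
    [IsProbabilityMeasure P] (X : ℤ → Ω → ℝ) (k : ℕ) : alphaMix P X k ≤ 1 := by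
  exact csSup_le ⟨0, ∅, ∅, @MeasurableSet.empty Ω (pastSigma X),
    @MeasurableSet.empty Ω (futureSigma X k), by simp⟩ (aux_alpha_ub P X k)

lemma aux_cov_le_alpha {Ω : Type*} [MeasurableSpace Ω] (P : Measure Ω)
    [IsProbabilityMeasure P] (X : ℤ → Ω → ℝ) (M t : ℝ) (k : ℕ) :
    |(P ({ω | trunc M (X 0 ω) ≤ t} ∩ {ω | trunc M (X (k:ℤ) ω) ≤ t})).toReal
        - (P {ω | trunc M (X 0 ω) ≤ t}).toReal * (P {ω | trunc M (X (k:ℤ) ω) ≤ t}).toReal|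
      ≤ alphaMix P X k := by
  refine le_csSup (aux_alpha_bddAbove P X k) ?_
  refine ⟨{ω | trunc M (X 0 ω) ≤ t}, {ω | trunc M (X (k:ℤ) ω) ≤ t}, ?_, ?_, rfl⟩
  · have hle : MeasurableSpace.comap (X 0) (inferInstance : MeasurableSpace ℝ)
        ≤ pastSigma X :=
      le_iSup (fun i : {i : ℤ // i ≤ 0} =>
        MeasurableSpace.comap (X i.1) (inferInstance : MeasurableSpace ℝ)) ⟨0, le_refl 0⟩
    exact hle _ ⟨{x | trunc M x ≤ t}, (trunc_meas M) measurableSet_Iic, rfl⟩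
  · have hle : MeasurableSpace.comap (X (k:ℤ)) (inferInstance : MeasurableSpace ℝ)
        ≤ futureSigma X k :=
      le_iSup (fun i : {i : ℤ // (k:ℤ) ≤ i} =>
        MeasurableSpace.comap (X i.1) (inferInstance : MeasurableSpace ℝ)) ⟨(k:ℤ), le_refl _⟩
    exact hle _ ⟨{x | trunc M x ≤ t}, (trunc_meas M) measurableSet_Iic, rfl⟩
lemma aux_shift {Ω : Type*} [MeasurableSpace Ω] (P : Measure Ω)
    [IsProbabilityMeasure P] (X : ℤ → Ω → ℝ) (hmeas : ∀ i, Measurable (X i))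
    (hstat : IsStrictlyStationary P X) (M t : ℝ) (i j : ℤ) :
    P ({ω | trunc M (X i ω) ≤ t} ∩ {ω | trunc M (X j ω) ≤ t})
        = P ({ω | trunc M (X 0 ω) ≤ t} ∩ {ω | trunc M (X (j - i) ω) ≤ t})
      ∧ P {ω | trunc M (X i ω) ≤ t} = P {ω | trunc M (X 0 ω) ≤ t}
      ∧ P {ω | trunc M (X j ω) ≤ t} = P {ω | trunc M (X (j - i) ω) ≤ t} := by
  have key := hstat 2 ![i, j] (-i)
  have hF : Measurable (fun ω (r : Fin 2) => X (![i, j] r + -i) ω) :=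
    measurable_pi_lambda _ (fun r => hmeas _)
  have hG : Measurable (fun ω (r : Fin 2) => X (![i, j] r) ω) :=
    measurable_pi_lambda _ (fun r => hmeas _)
  have happ : ∀ S : Set (Fin 2 → ℝ), MeasurableSet S →
      P ((fun ω (r : Fin 2) => X (![i, j] r) ω) ⁻¹' S)
        = P ((fun ω (r : Fin 2) => X (![i, j] r + -i) ω) ⁻¹' S) := by
    intro S hS
    rw [← Measure.map_apply hG hS, ← Measure.map_apply hF hS, key]
  have hm0 : Measurable (fun p : Fin 2 → ℝ => trunc M (p 0)) :=
    (trunc_meas M).comp (measurable_pi_apply 0)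
  have hm1 : Measurable (fun p : Fin 2 → ℝ => trunc M (p 1)) :=
    (trunc_meas M).comp (measurable_pi_apply 1)
  have e0 : (i + -i) = (0:ℤ) := by ring
  have e1 : (j + -i) = j - i := by ring
  refine ⟨?_, ?_, ?_⟩
  · have h := happ ({p | trunc M (p 0) ≤ t} ∩ {p | trunc M (p 1) ≤ t})
      ((hm0 measurableSet_Iic).inter (hm1 measurableSet_Iic))
    simpa [Set.preimage_inter, Set.preimage_setOf_eq, Matrix.cons_val_zero,
      Matrix.cons_val_one, Matrix.head_cons, e0, e1] using h
  · have h := happ {p | trunc M (p 0) ≤ t} (hm0 measurableSet_Iic)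
    simpa [Set.preimage_setOf_eq, Matrix.cons_val_zero, e0] using h
  · have h := happ {p | trunc M (p 1) ≤ t} (hm1 measurableSet_Iic)
    simpa [Set.preimage_setOf_eq, Matrix.cons_val_one, Matrix.head_cons, e1] using h
lemma aux_toReal_le_one {Ω : Type*} [MeasurableSpace Ω] (P : Measure Ω)
    [IsProbabilityMeasure P] (A : Set Ω) : (P A).toReal ≤ 1 := by
  have h := ENNReal.toReal_mono (by simp) (prob_le_one (μ := P) (s := A))
  simpa using h

lemma aux_cov_le {Ω : Type*} [MeasurableSpace Ω] (P : Measure Ω) [IsProbabilityMeasure P]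
    (A B : Set Ω) (hB : MeasurableSet B) :
    |(P (A ∩ B)).toReal - (P A).toReal * (P B).toReal|
      ≤ min (P A).toReal (1 - (P A).toReal) := by
  set a := (P A).toReal
  set b := (P B).toReal
  set c := (P (A ∩ B)).toReal
  have ha0 : 0 ≤ a := ENNReal.toReal_nonneg
  have hb0 : 0 ≤ b := ENNReal.toReal_nonneg
  have hc0 : 0 ≤ c := ENNReal.toReal_nonneg
  have ha1 : a ≤ 1 := aux_toReal_le_one P A
  have hb1 : b ≤ 1 := aux_toReal_le_one P B
  have hca : c ≤ a := ENNReal.toReal_mono (measure_ne_top _ _)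
      (measure_mono Set.inter_subset_left)
  have hcb : c ≤ b := ENNReal.toReal_mono (measure_ne_top _ _)
      (measure_mono Set.inter_subset_right)
  have hincl : a + b - 1 ≤ c := by
    have h1 : P (A ∪ B) + P (A ∩ B) = P A + P B := measure_union_add_inter A hB
    have h2 : (P (A ∪ B)).toReal + c = a + b := by
      rw [← ENNReal.toReal_add (measure_ne_top _ _) (measure_ne_top _ _), h1,
        ENNReal.toReal_add (measure_ne_top _ _) (measure_ne_top _ _)]
    have h3 : (P (A ∪ B)).toReal ≤ 1 := aux_toReal_le_one P _
    linarith
  refine le_min (abs_le.2 ⟨?_, ?_⟩) (abs_le.2 ⟨?_, ?_⟩) <;> nlinarith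
lemma aux_variance_eq {Ω : Type*} [MeasurableSpace Ω] (P : Measure Ω) [IsProbabilityMeasure P]
    {ι : Type*} [DecidableEq ι] (s : Finset ι) (A : ι → Set Ω) (hA : ∀ i, MeasurableSet (A i)) :
    ProbabilityTheory.variance (fun ω => ∑ i ∈ s, Set.indicator (A i) (fun _ => (1:ℝ)) ω) P
      = ∑ i ∈ s, ∑ j ∈ s,
          ((P (A i ∩ A j)).toReal - (P (A i)).toReal * (P (A j)).toReal) := by
  have hind_int : ∀ B : Set Ω, MeasurableSet B →
      Integrable (Set.indicator B (fun _ => (1:ℝ))) P :=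
    fun B hB => (integrable_const 1).indicator hB
  have hmem : MemLp (fun ω => ∑ i ∈ s, Set.indicator (A i) (fun _ => (1:ℝ)) ω) 2 P :=
    by
    have h := memLp_finset_sum' (μ := P) (p := 2) s
      (fun i _ => (memLp_const (1:ℝ)).indicator (hA i))
    convert h using 1
    funext ω
    simp
  rw [ProbabilityTheory.variance_eq_sub hmem]
  have hES : (∫ ω, (∑ i ∈ s, Set.indicator (A i) (fun _ => (1:ℝ)) ω) ∂P)
      = ∑ i ∈ s, (P (A i)).toReal := by
    rw [integral_finset_sum s (fun i _ => hind_int _ (hA i))]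
    refine Finset.sum_congr rfl fun i _ => ?_
    rw [integral_indicator_const (1:ℝ) (hA i)]
    simp [Measure.real]
  have hsq : (fun ω => (∑ i ∈ s, Set.indicator (A i) (fun _ => (1:ℝ)) ω)) ^ 2
      = fun ω => ∑ i ∈ s, ∑ j ∈ s, Set.indicator (A i ∩ A j) (fun _ => (1:ℝ)) ω := by
    funext ω
    rw [Pi.pow_apply, sq, Finset.sum_mul_sum]
    refine Finset.sum_congr rfl fun i _ => Finset.sum_congr rfl fun j _ => ?_
    have h := congrFun (Set.inter_indicator_one (s := A i) (t := A j) (M₀ := ℝ)) ω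
    simp only [Pi.mul_apply] at h
    exact h.symm
  have hES2 : (∫ ω, ((fun ω => ∑ i ∈ s, Set.indicator (A i) (fun _ => (1:ℝ)) ω) ^ 2) ω ∂P)
      = ∑ i ∈ s, ∑ j ∈ s, (P (A i ∩ A j)).toReal := by
    rw [hsq, integral_finset_sum s (fun i _ =>
      integrable_finset_sum s (fun j _ => hind_int _ ((hA i).inter (hA j))))]
    refine Finset.sum_congr rfl fun i _ => ?_
    rw [integral_finset_sum s (fun j _ => hind_int _ ((hA i).inter (hA j)))]
    refine Finset.sum_congr rfl fun j _ => ?_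
    rw [integral_indicator_const (1:ℝ) ((hA i).inter (hA j))]
    simp [Measure.real]
  rw [hES2, hES, sq, Finset.sum_mul_sum]
  rw [← Finset.sum_sub_distrib]
  refine Finset.sum_congr rfl fun i _ => ?_
  rw [← Finset.sum_sub_distrib]
lemma aux_count (q : ℕ) (g : ℕ → ℝ) (hg : ∀ k, 0 ≤ g k) :
    ∑ i ∈ Finset.Icc (1:ℤ) q, ∑ j ∈ Finset.Icc (1:ℤ) q, g ((j - i).natAbs)
      ≤ 2 * q * ∑ k ∈ Finset.range q, g k := by
  have hcard : (Finset.Icc (1:ℤ) q).card = q := by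
    rw [Int.card_Icc]; omega
  have inner : ∀ i ∈ Finset.Icc (1:ℤ) q,
      ∑ j ∈ Finset.Icc (1:ℤ) q, g ((j - i).natAbs) ≤ ∑ k ∈ Finset.range q, 2 * g k := by
    intro i hi
    rw [Finset.mem_Icc] at hi
    have hmaps : ∀ j ∈ Finset.Icc (1:ℤ) q, (j - i).natAbs ∈ Finset.range q := by
      intro j hj
      rw [Finset.mem_Icc] at hj
      rw [Finset.mem_range]
      omega
    rw [← Finset.sum_fiberwise_of_maps_to hmaps]
    refine Finset.sum_le_sum fun k _ => ?_
    have hsub : (Finset.Icc (1:ℤ) q).filter (fun j => (j - i).natAbs = k)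
        ⊆ insert (i + k) {i - k} := by
      intro j hj
      rw [Finset.mem_filter] at hj
      simp only [Finset.mem_insert, Finset.mem_singleton]
      omega
    calc ∑ j ∈ (Finset.Icc (1:ℤ) q).filter (fun j => (j - i).natAbs = k), g ((j - i).natAbs)
        = ∑ j ∈ (Finset.Icc (1:ℤ) q).filter (fun j => (j - i).natAbs = k), g k := by
          refine Finset.sum_congr rfl fun j hj => ?_
          rw [Finset.mem_filter] at hj
          rw [hj.2]
      _ = ((Finset.Icc (1:ℤ) q).filter (fun j => (j - i).natAbs = k)).card * g k := by
          rw [Finset.sum_const, nsmul_eq_mul]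
      _ ≤ 2 * g k := by
          refine mul_le_mul_of_nonneg_right ?_ (hg k)
          have h2 : ((Finset.Icc (1:ℤ) q).filter (fun j => (j - i).natAbs = k)).card ≤ 2 := by
            refine le_trans (Finset.card_le_card hsub) ?_
            refine le_trans (Finset.card_insert_le _ _) ?_
            simp
          exact_mod_cast h2
  calc ∑ i ∈ Finset.Icc (1:ℤ) q, ∑ j ∈ Finset.Icc (1:ℤ) q, g ((j - i).natAbs)
      ≤ ∑ _i ∈ Finset.Icc (1:ℤ) q, ∑ k ∈ Finset.range q, 2 * g k :=
        Finset.sum_le_sum inner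
    _ = 2 * q * ∑ k ∈ Finset.range q, g k := by
        rw [Finset.sum_const, hcard, nsmul_eq_mul, Finset.mul_sum, Finset.mul_sum]
        exact Finset.sum_congr rfl fun k _ => by ring

/-- `∫_{-M}^{M} (Var ∑_{i=1}^q 1_{X_i' ≤ t})^{1/2} dt
  ≤ 2√2 √q ∫_0^∞ (∑_{k=0}^{q-1} min(α(k), H(t)))^{1/2} dt`, with `M = Q(v)`. -/
theorem integral_sqrt_variance_le_mixing {Ω : Type*} [MeasurableSpace Ω]
    (P : Measure Ω) [IsProbabilityMeasure P] (X : ℤ → Ω → ℝ)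
    (hmeas : ∀ i, Measurable (X i)) (hstat : IsStrictlyStationary P X)
    (H Q : ℝ → ℝ)
    (hH : ∀ t, H t = (P {ω | t < |X 0 ω|}).toReal)
    (hQ : ∀ u, Q u = sInf {t | 0 ≤ t ∧ H t ≤ u})
    (v : ℝ) (hv : v ∈ Set.Ioc (0 : ℝ) 1) (q : ℕ) (hq : 1 ≤ q)
    (hV : IntegrableOn
      (fun t => Real.sqrt (∑ k ∈ Finset.range q, min (alphaMix P X k) (H t)))
      (Set.Ioi 0)) :
    ∫ t in Set.Icc (-(Q v)) (Q v),
        Real.sqrt (ProbabilityTheory.variance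
          (fun ω => ∑ i ∈ Finset.Icc (1 : ℤ) q,
            (if trunc (Q v) (X i ω) ≤ t then (1 : ℝ) else 0)) P)
      ≤ 2 * Real.sqrt 2 * Real.sqrt q *
          ∫ t in Set.Ioi 0,
            Real.sqrt (∑ k ∈ Finset.range q, min (alphaMix P X k) (H t)) := by
  set M := Q v with hM
  set φ : ℝ → ℝ := fun u => Real.sqrt (∑ k ∈ Finset.range q, min (alphaMix P X k) (H u))
    with hφ
  set A : ℝ → ℤ → Set Ω := fun t i => {ω | trunc M (X i ω) ≤ t} with hA
  -- basic facts
  have hM0 : 0 ≤ M := by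
    rw [hM, hQ]
    exact Real.sInf_nonneg (fun x hx => hx.1)
  have hH0 : ∀ u, 0 ≤ H u := fun u => by rw [hH]; exact ENNReal.toReal_nonneg
  have hHmono : Antitone H := by
    intro a b hab
    rw [hH, hH]
    exact ENNReal.toReal_mono (measure_ne_top _ _)
      (measure_mono (fun ω hω => lt_of_le_of_lt hab hω))
  have hHmeas : Measurable H := hHmono.measurable
  have hAmeas : ∀ t i, MeasurableSet (A t i) := fun t i =>
    ((trunc_meas M).comp (hmeas i)) measurableSet_Iic
  -- marginal bound by H |t|
  have hmarg : ∀ t : ℝ, (t < 0 → P {ω | |X 0 ω| = -t} = 0) →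
      min (P (A t 0)).toReal (1 - (P (A t 0)).toReal) ≤ H |t| := by
    intro t ht
    rcases le_or_gt 0 t with h0 | h0
    · rw [abs_of_nonneg h0, hH]
      have hsub : Set.univ ⊆ A t 0 ∪ {ω | t < |X 0 ω|} := by
        intro ω _
        rcases le_or_gt (trunc M (X 0 ω)) t with h | h
        · exact Or.inl h
        · refine Or.inr ?_
          simp only [Set.mem_setOf_eq]
          simp only [trunc] at h
          rcases lt_max_iff.1 h with h' | h'
          · have hx : t < X 0 ω := lt_of_lt_of_le h' (min_le_left _ _)
            exact lt_of_lt_of_le hx (le_abs_self _)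
          · linarith
      have h1 : (1:ℝ) ≤ (P (A t 0)).toReal + (P {ω | t < |X 0 ω|}).toReal := by
        have h2 : P Set.univ ≤ P (A t 0) + P {ω | t < |X 0 ω|} :=
          le_trans (measure_mono hsub) (measure_union_le _ _)
        have h3 := ENNReal.toReal_mono
          (by exact ENNReal.add_ne_top.2 ⟨measure_ne_top _ _, measure_ne_top _ _⟩) h2
        rwa [measure_univ, ENNReal.toReal_one,
          ENNReal.toReal_add (measure_ne_top _ _) (measure_ne_top _ _)] at h3
      exact (min_le_right _ _).trans (by linarith)
    · rw [abs_of_neg h0, hH]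
      have hzero := ht h0
      have hsub : A t 0 ⊆ {ω | -t < |X 0 ω|} ∪ {ω | |X 0 ω| = -t} := by
        intro ω hω
        simp only [hA, Set.mem_setOf_eq, trunc, max_le_iff] at hω
        obtain ⟨h1, h2⟩ := hω
        have hxle : X 0 ω ≤ t := by
          rcases min_le_iff.1 h1 with h | h
          · exact h
          · linarith
        have hge : -t ≤ |X 0 ω| := le_trans (neg_le_neg hxle) (neg_le_abs _)
        rcases hge.lt_or_eq with h | h
        · exact Or.inl h
        · exact Or.inr h.symm
      have hPA : P (A t 0) ≤ P {ω | -t < |X 0 ω|} := by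
        refine le_trans (measure_mono hsub) ?_
        refine le_trans (measure_union_le _ _) ?_
        rw [hzero, add_zero]
      exact (min_le_left _ _).trans (ENNReal.toReal_mono (measure_ne_top _ _) hPA)
  -- covariance bound
  have hcov : ∀ t : ℝ, (t < 0 → P {ω | |X 0 ω| = -t} = 0) → ∀ i j : ℤ,
      |(P (A t i ∩ A t j)).toReal - (P (A t i)).toReal * (P (A t j)).toReal|
        ≤ min (alphaMix P X ((j - i).natAbs)) (H |t|) := by
    have hcov' : ∀ t : ℝ, (t < 0 → P {ω | |X 0 ω| = -t} = 0) → ∀ i j : ℤ, i ≤ j →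
        |(P (A t i ∩ A t j)).toReal - (P (A t i)).toReal * (P (A t j)).toReal|
          ≤ min (alphaMix P X ((j - i).natAbs)) (H |t|) := by
      intro t ht i j hij
      obtain ⟨h1, h2, h3⟩ := aux_shift P X hmeas hstat M t i j
      have hk : (((j - i).natAbs : ℤ)) = j - i := Int.natAbs_of_nonneg (by omega)
      simp only [hA] at h1 h2 h3 ⊢
      rw [h1, h2, h3, ← hk]
      refine le_min (aux_cov_le_alpha P X M t _) ?_
      refine le_trans (aux_cov_le P _ _ (((trunc_meas M).comp (hmeas _)) measurableSet_Iic)) ?_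
      have := hmarg t ht
      simpa [hA] using this
    intro t ht i j
    rcases le_total i j with hij | hij
    · exact hcov' t ht i j hij
    · have hsymm : (P (A t i ∩ A t j)).toReal - (P (A t i)).toReal * (P (A t j)).toReal
          = (P (A t j ∩ A t i)).toReal - (P (A t j)).toReal * (P (A t i)).toReal := by
        rw [Set.inter_comm, mul_comm]
      have hnat : (j - i).natAbs = (i - j).natAbs := by omega
      rw [hsymm, hnat]
      exact hcov' t ht j i hij
  -- variance formula
  have hvar : ∀ t : ℝ,
      ProbabilityTheory.variance
        (fun ω => ∑ i ∈ Finset.Icc (1 : ℤ) q,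
          (if trunc M (X i ω) ≤ t then (1 : ℝ) else 0)) P
      = ∑ i ∈ Finset.Icc (1 : ℤ) q, ∑ j ∈ Finset.Icc (1 : ℤ) q,
          ((P (A t i ∩ A t j)).toReal - (P (A t i)).toReal * (P (A t j)).toReal) := by
    intro t
    have hfun : (fun ω => ∑ i ∈ Finset.Icc (1 : ℤ) q,
        (if trunc M (X i ω) ≤ t then (1 : ℝ) else 0))
        = fun ω => ∑ i ∈ Finset.Icc (1 : ℤ) q,
            Set.indicator (A t i) (fun _ => (1:ℝ)) ω := by
      funext ω
      refine Finset.sum_congr rfl fun i _ => ?_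
      simp [Set.indicator_apply, hA, Set.mem_setOf_eq]
    rw [hfun, aux_variance_eq P _ (A t) (hAmeas t)]
  -- key pointwise bound
  have key : ∀ t : ℝ, (t < 0 → P {ω | |X 0 ω| = -t} = 0) →
      ProbabilityTheory.variance
        (fun ω => ∑ i ∈ Finset.Icc (1 : ℤ) q,
          (if trunc M (X i ω) ≤ t then (1 : ℝ) else 0)) P
      ≤ 2 * q * ∑ k ∈ Finset.range q, min (alphaMix P X k) (H |t|) := by
    intro t ht
    rw [hvar t]
    refine le_trans ?_ (aux_count q (fun k => min (alphaMix P X k) (H |t|))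
      (fun k => le_min (aux_alpha_nonneg P X k) (hH0 _)))
    refine Finset.sum_le_sum fun i _ => Finset.sum_le_sum fun j _ => ?_
    exact (le_abs_self _).trans (hcov t ht i j)
  -- a.e. no atoms
  have hT : Set.Countable {r : ℝ | 0 < P {ω | |X 0 ω| = r}} :=
    Measure.countable_meas_level_set_pos ((hmeas 0).abs)
  have hNcnt : Set.Countable {t : ℝ | 0 < P {ω | |X 0 ω| = -t}} := by
    have h := hT.preimage (neg_injective : Function.Injective (Neg.neg : ℝ → ℝ))
    simpa [Set.preimage_setOf_eq] using h
  have hNnull : (volume : Measure ℝ) {t : ℝ | 0 < P {ω | |X 0 ω| = -t}} = 0 :=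
    hNcnt.measure_zero _
  have hae : ∀ᵐ t ∂(volume : Measure ℝ), (t < 0 → P {ω | |X 0 ω| = -t} = 0) := by
    have hset : {a : ℝ | ¬ P {ω | |X 0 ω| = -a} = 0}
        = {t : ℝ | 0 < P {ω | |X 0 ω| = -t}} := by
      ext a; simp [pos_iff_ne_zero]
    have h : ∀ᵐ t ∂(volume : Measure ℝ), P {ω | |X 0 ω| = -t} = 0 :=
      (ae_iff).2 (by rw [hset]; exact hNnull)
    filter_upwards [h] with t htn
    exact fun _ => htn
  -- bounds on φ
  have hφ0 : ∀ u, 0 ≤ φ u := fun u => Real.sqrt_nonneg _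
  have hsum_le : ∀ u : ℝ, ∑ k ∈ Finset.range q, min (alphaMix P X k) (H u) ≤ q := by
    intro u
    calc ∑ k ∈ Finset.range q, min (alphaMix P X k) (H u)
        ≤ ∑ _k ∈ Finset.range q, (1:ℝ) :=
          Finset.sum_le_sum fun k _ => (min_le_left _ _).trans (aux_alpha_le_one P X k)
      _ = q := by simp
  have hφle : ∀ u : ℝ, φ u ≤ Real.sqrt q := fun u => by
    rw [hφ]
    exact Real.sqrt_le_sqrt (hsum_le u)
  have hφmeas : Measurable φ := by
    rw [hφ]
    exact Real.continuous_sqrt.measurable.comp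
      (Finset.measurable_sum _ fun k _ => measurable_const.min hHmeas)
  have habs_meas : Measurable (fun t : ℝ => φ |t|) := hφmeas.comp measurable_abs
  have hint_abs : IntegrableOn (fun t : ℝ => φ |t|) (Set.Icc (-M) M) volume := by
    refine Integrable.mono' (g := fun _ => Real.sqrt q) ?_ habs_meas.aestronglyMeasurable ?_
    · exact (integrableOn_const_iff).2 (Or.inr measure_Icc_lt_top)
    · refine Filter.Eventually.of_forall fun t => ?_
      rw [Real.norm_eq_abs, abs_of_nonneg (hφ0 _)]
      exact hφle _
  -- step 1: bound the integrand a.e.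
  have step1 : (∫ t in Set.Icc (-M) M,
        Real.sqrt (ProbabilityTheory.variance
          (fun ω => ∑ i ∈ Finset.Icc (1 : ℤ) q,
            (if trunc M (X i ω) ≤ t then (1 : ℝ) else 0)) P))
      ≤ ∫ t in Set.Icc (-M) M, Real.sqrt (2*q) * φ |t| := by
    refine integral_mono_of_nonneg
      (Filter.Eventually.of_forall fun t => Real.sqrt_nonneg _)
      (hint_abs.const_mul _) ?_
    refine ae_restrict_of_ae (hae.mono fun t ht => ?_)
    have h1 := key t ht
    have h2 := Real.sqrt_le_sqrt h1
    rwa [Real.sqrt_mul (by positivity : (0:ℝ) ≤ 2*q)] at h2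
  -- step 2: reflection
  have hII1 : IntervalIntegrable (fun t : ℝ => φ |t|) volume (-M) 0 := by
    rw [intervalIntegrable_iff_integrableOn_Ioc_of_le (by linarith)]
    exact hint_abs.mono_set (fun x hx => ⟨hx.1.le, le_trans hx.2 hM0⟩)
  have hII2 : IntervalIntegrable (fun t : ℝ => φ |t|) volume 0 M := by
    rw [intervalIntegrable_iff_integrableOn_Ioc_of_le hM0]
    exact hint_abs.mono_set (fun x hx => ⟨by linarith [hx.1], hx.2⟩)
  have hsplit : (∫ t in Set.Icc (-M) M, φ |t|)
      = (∫ x in (-M)..(0:ℝ), φ |x|) + ∫ x in (0:ℝ)..M, φ |x| := by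
    rw [MeasureTheory.integral_Icc_eq_integral_Ioc,
      ← intervalIntegral.integral_of_le (by linarith : -M ≤ M),
      ← intervalIntegral.integral_add_adjacent_intervals hII1 hII2]
  have hrefl : (∫ x in (-M)..(0:ℝ), φ |x|) = ∫ x in (0:ℝ)..M, φ |x| := by
    have h := intervalIntegral.integral_comp_neg (a := (0:ℝ)) (b := M)
      (f := fun t : ℝ => φ |t|)
    simp only [abs_neg, neg_zero] at h
    exact h.symm
  have hIoc : (∫ x in (0:ℝ)..M, φ |x|) = ∫ t in Set.Ioc (0:ℝ) M, φ t := by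
    rw [intervalIntegral.integral_of_le hM0]
    refine setIntegral_congr_fun measurableSet_Ioc fun x hx => ?_
    simp only [abs_of_pos hx.1]
  have hmono2 : (∫ t in Set.Ioc (0:ℝ) M, φ t) ≤ ∫ t in Set.Ioi (0:ℝ), φ t := by
    refine setIntegral_mono_set hV ?_
      (HasSubset.Subset.eventuallyLE Set.Ioc_subset_Ioi_self)
    exact Filter.Eventually.of_forall fun t => hφ0 t
  have hIoi0 : 0 ≤ ∫ t in Set.Ioi (0:ℝ), φ t :=
    setIntegral_nonneg measurableSet_Ioi fun t _ => hφ0 t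
  -- assemble
  calc (∫ t in Set.Icc (-M) M,
        Real.sqrt (ProbabilityTheory.variance
          (fun ω => ∑ i ∈ Finset.Icc (1 : ℤ) q,
            (if trunc M (X i ω) ≤ t then (1 : ℝ) else 0)) P))
      ≤ ∫ t in Set.Icc (-M) M, Real.sqrt (2*q) * φ |t| := step1
    _ = Real.sqrt (2*q) * ∫ t in Set.Icc (-M) M, φ |t| := by
        rw [MeasureTheory.integral_const_mul]
    _ = Real.sqrt (2*q) * (2 * ∫ t in Set.Ioc (0:ℝ) M, φ t) := by
        rw [hsplit, hrefl, hIoc]; ring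
    _ ≤ Real.sqrt (2*q) * (2 * ∫ t in Set.Ioi (0:ℝ), φ t) := by
        refine mul_le_mul_of_nonneg_left (by linarith) (Real.sqrt_nonneg _)
    _ = 2 * Real.sqrt 2 * Real.sqrt q * ∫ t in Set.Ioi (0:ℝ), φ t := by
        rw [Real.sqrt_mul (by norm_num : (0:ℝ) ≤ 2)]
        ring
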